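/- There exists a class of languages learnable by a total, set-driven, monotone, explanatory learner that is not learnable by any (partial) strongly monotone, behaviourally correct, Gold-style learner: [RTxtSdMonEx] \ [TxtGSMonBc] ≠ ∅. -/

import Mathlib

/-- The `e`-th computably enumerable set: the domain of the `e`-th partial
computable function in the standard numbering of `Nat.Partrec.Code`. -/
def Wset (e : ℕ) : Set ℕ := {x | ((Denumerable.ofNat Nat.Partrec.Code e).eval x).Dom}

/-- A text: a function from ℕ to ℕ ∪ {#}, with `none` playing the role of the pause symbol #. -/
def Text := ℕ → Option ℕ

/-- The content of a text: its range without the pause symbol. -/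
def content (T : Text) : Set ℕ := {x | ∃ n, T n = some x}

/-- The initial segment `T[n]` of a text, as a finite sequence over ℕ ∪ {#}. -/
def seg (T : Text) (n : ℕ) : List (Option ℕ) := (List.range n).map T

/-- The content of a finite sequence over ℕ ∪ {#}. -/
def contentSeg (l : List (Option ℕ)) : Set ℕ := {x | (some x) ∈ l}

/-- The content of `T[n]` as a finite set. -/
def fset (T : Text) (n : ℕ) : Finset ℕ := ((List.range n).map T).reduceOption.toFinset

/-- The language L_{2k+1} = {0, 2, 4, …, 2k, 2k+1}. -/
def Lodd (k : ℕ) : Set ℕ := {n | (Even n ∧ n ≤ 2 * k) ∨ n = 2 * k + 1}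

/-- The even numbers 2ℕ. -/
def Ev : Set ℕ := {n | Even n}

/-- The class {2ℕ} ∪ { L_{2k+1} : k ∈ ℕ }. -/
def sepClass : Set (Set ℕ) := insert Ev {L | ∃ k : ℕ, L = Lodd k}

/-- [RTxtSdMonEx]: classes learnable by some total computable set-driven learner which is
monotone and explanatory on texts of the learned languages. -/
def RTxtSdMonEx : Set (Set (Set ℕ)) :=
  {𝓛 | ∃ h : Finset ℕ → ℕ, Computable h ∧
    ∀ L ∈ 𝓛, ∀ T : Text, content T = L →
      (∃ e : ℕ, Wset e = L ∧ ∃ n₀ : ℕ, ∀ n ≥ n₀, h (fset T n) = e) ∧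
      (∀ i j : ℕ, i ≤ j →
        Wset (h (fset T i)) ∩ content T ⊆ Wset (h (fset T j)) ∩ content T)}

/-- [TxtGSMonBc]: classes learnable by some partial computable Gold-style learner which is
strongly monotone and behaviourally correct on texts of the learned languages. -/
def TxtGSMonBc : Set (Set (Set ℕ)) :=
  {𝓛 | ∃ h : List (Option ℕ) →. ℕ, Partrec h ∧
    ∀ L ∈ 𝓛, ∀ T : Text, content T = L →
      (∃ n₀ : ℕ, ∀ n ≥ n₀, ∃ e ∈ h (seg T n), Wset e = L) ∧
      (∀ i j : ℕ, i ≤ j → ∀ a ∈ h (seg T i), ∀ b ∈ h (seg T j), Wset a ⊆ Wset b)}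

open Denumerable Encodable Nat.Partrec.Code


-- c.e. codes from primrec predicates
lemma code_of_primrecPred {P : ℕ → Prop} [DecidablePred P] (h : PrimrecPred P) :
    ∃ c : Nat.Partrec.Code, ∀ x, (c.eval x).Dom ↔ P x := by
  have hre : REPred P := ComputablePred.to_re h.computablePred
  have h2 : Partrec fun a : ℕ => (Part.assert (P a) fun _ => Part.some ()).map fun _ => (0 : ℕ) :=
    hre.map ((Computable.const (0 : ℕ)).comp Computable.fst).to₂
  obtain ⟨c, hc⟩ := Nat.Partrec.Code.exists_code.1 (Partrec.nat_iff.1 h2)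
  refine ⟨c, fun x => ?_⟩
  rw [hc]
  exact ⟨fun h => h.fst, fun h => ⟨h, trivial⟩⟩

lemma exists_eEv : ∃ e : ℕ, Wset e = Ev := by
  have hp : PrimrecPred fun x : ℕ => x % 2 = 0 :=
    Primrec.eq.comp (Primrec.nat_mod.comp Primrec.id (Primrec.const 2)) (Primrec.const 0)
  obtain ⟨c, hc⟩ := code_of_primrecPred hp
  refine ⟨encode c, ?_⟩
  ext x
  show ((ofNat Nat.Partrec.Code (encode c)).eval x).Dom ↔ _
  rw [ofNat_encode, hc]
  simp [Ev, Nat.even_iff]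

lemma exists_eL : ∃ eL : ℕ → ℕ, Primrec eL ∧ ∀ k, Wset (eL k) = Lodd k := by
  have hp : PrimrecPred fun z : ℕ =>
      (z.unpair.2 % 2 = 0 ∧ z.unpair.2 ≤ 2 * z.unpair.1) ∨ z.unpair.2 = 2 * z.unpair.1 + 1 := by
    have h1 : Primrec fun z : ℕ => z.unpair.1 := Primrec.fst.comp Primrec.unpair
    have h2 : Primrec fun z : ℕ => z.unpair.2 := Primrec.snd.comp Primrec.unpair
    exact PrimrecPred.or
      (PrimrecPred.and
        (Primrec.eq.comp (Primrec.nat_mod.comp h2 (Primrec.const 2)) (Primrec.const 0))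
        (Primrec.nat_le.comp h2 (Primrec.nat_mul.comp (Primrec.const 2) h1)))
      (Primrec.eq.comp h2
        (Primrec.nat_add.comp (Primrec.nat_mul.comp (Primrec.const 2) h1) (Primrec.const 1)))
  obtain ⟨c, hc⟩ := code_of_primrecPred hp
  refine ⟨fun k => encode (curry c k),
    Primrec.encode.comp (primrec₂_curry.comp (Primrec.const c) Primrec.id), fun k => ?_⟩
  ext x
  show ((ofNat Nat.Partrec.Code (encode (curry c k))).eval x).Dom ↔ _
  rw [ofNat_encode, eval_curry, hc]
  simp only [Nat.unpair_pair, Lodd, Set.mem_setOf_eq, Nat.even_iff]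


def learner (eL : ℕ → ℕ) (eEv : ℕ) (s : Finset ℕ) : ℕ :=
  Option.casesOn ((s.sort (·≤·)).find? fun m => m % 2 == 1) eEv fun m => eL (m / 2)

lemma learner_no_odd {eL : ℕ → ℕ} {eEv : ℕ} {s : Finset ℕ} (h : ∀ m ∈ s, m % 2 = 0) :
    learner eL eEv s = eEv := by
  have hn : ((s.sort (·≤·)).find? fun m => m % 2 == 1) = none :=
    List.find?_eq_none.2 fun x hx => by
      have := h x (Finset.mem_sort (α := ℕ) (·≤·) |>.1 hx); simp; omega
  simp [learner, hn]

lemma learner_odd {eL : ℕ → ℕ} {eEv : ℕ} {s : Finset ℕ} {k : ℕ}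
    (hmem : 2 * k + 1 ∈ s) (hsub : ∀ m ∈ s, m ∈ Lodd k) : learner eL eEv s = eL k := by
  have hsome : ((s.sort (·≤·)).find? fun m => m % 2 == 1).isSome :=
    List.find?_isSome.2 ⟨2 * k + 1, (Finset.mem_sort (α := ℕ) (·≤·)).2 hmem, by simp⟩
  obtain ⟨m, hm⟩ := Option.isSome_iff_exists.1 hsome
  have hmmem : m ∈ s := (Finset.mem_sort (α := ℕ) (·≤·)).1 (List.mem_of_find?_eq_some hm)
  have hodd : m % 2 = 1 := by have := List.find?_some hm; simpa using this
  have hmk : m = 2 * k + 1 := by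
    rcases hsub m hmmem with ⟨he, _⟩ | he
    · rw [Nat.even_iff] at he; omega
    · exact he
  have : m / 2 = k := by omega
  simp [learner, hm, this]

lemma foldl_orElse (l : List ℕ) (o : Option ℕ) :
    l.foldl (fun o m => o <|> if m % 2 = 1 then some m else none) o
      = (o <|> l.find? fun m => m % 2 == 1) := by
  induction l generalizing o with
  | nil => cases o <;> rfl
  | cons a l ih =>
    rw [List.foldl_cons, ih, List.find?_cons]
    by_cases hpa : a % 2 = 1
    · have : (a % 2 == 1) = true := by simp [hpa]
      rw [this, if_pos hpa]; cases o <;> rfl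
    · have : (a % 2 == 1) = false := by simp; omega
      rw [this, if_neg hpa]; cases o <;> rfl

lemma raise'_foldl_aux : ∀ (l : List ℕ) (n : ℕ) (acc : List ℕ),
    (l.foldl (fun q m => (m + q.1 + 1, (m + q.1) :: q.2)) (n, acc)).2
      = (raise' l n).reverse ++ acc := by
  intro l
  induction l with
  | nil => intro n acc; simp [raise']
  | cons a l ih => intro n acc; simp [raise', ih, List.reverse_cons]

lemma sort_ofNat (n : ℕ) :
    (ofNat (Finset ℕ) n).sort (·≤·) = raise' (ofNat (List ℕ) n) 0 := by
  have h1 : ofNat (Finset ℕ) n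
      = Finset.map (eqv ℕ).symm.toEmbedding (raise'Finset (ofNat (List ℕ) n) 0) :=
    ofNat_of_decode (by with_unfolding_all rfl)
  have h2 : Finset.map (eqv ℕ).symm.toEmbedding (raise'Finset (ofNat (List ℕ) n) 0)
      = raise'Finset (ofNat (List ℕ) n) 0 := by
    ext x; simp [Denumerable.eqv]
  rw [h1, h2]
  show Multiset.sort _ _ = _
  rw [raise'Finset]
  rw [Multiset.coe_sort]
  exact List.mergeSort_eq_self _ (raise'_sorted _ _).sortedLE.pairwise

lemma learner_computable {eL : ℕ → ℕ} {eEv : ℕ} (hL : Primrec eL) :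
    Computable (learner eL eEv) := by
  have hfind : Primrec fun l : List ℕ => l.find? fun m => m % 2 == 1 := by
    have hstep : Primrec₂ fun (_ : List ℕ) (q : Option ℕ × ℕ) =>
        q.1 <|> if q.2 % 2 = 1 then some q.2 else none := by
      refine Primrec.option_orElse.comp (Primrec.fst.comp Primrec.snd) ?_
      refine Primrec.ite ?_ (Primrec.option_some.comp (Primrec.snd.comp Primrec.snd))
        (Primrec.const none)
      exact Primrec.eq.comp
        (Primrec.nat_mod.comp (Primrec.snd.comp Primrec.snd) (Primrec.const 2))
        (Primrec.const 1)
    exact (Primrec.list_foldl Primrec.id (Primrec.const none) hstep).of_eq fun l => by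
      simpa using foldl_orElse l none
  have hraise : Primrec fun n : ℕ => raise' (ofNat (List ℕ) n) 0 := by
    have hstep : Primrec₂ fun (_ : ℕ) (q : (ℕ × List ℕ) × ℕ) =>
        (q.2 + q.1.1 + 1, (q.2 + q.1.1) :: q.1.2) := by
      refine Primrec.pair ?_ ?_
      · exact Primrec.nat_add.comp
          (Primrec.nat_add.comp (Primrec.snd.comp Primrec.snd)
            (Primrec.fst.comp (Primrec.fst.comp Primrec.snd))) (Primrec.const 1)
      · exact Primrec.list_cons.comp
          (Primrec.nat_add.comp (Primrec.snd.comp Primrec.snd)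
            (Primrec.fst.comp (Primrec.fst.comp Primrec.snd)))
          (Primrec.snd.comp (Primrec.fst.comp Primrec.snd))
    have hfold : Primrec fun n : ℕ =>
        (((ofNat (List ℕ) n).foldl (fun q m => (m + q.1 + 1, (m + q.1) :: q.2))
          ((0 : ℕ), ([] : List ℕ))).2).reverse :=
      Primrec.list_reverse.comp (Primrec.snd.comp
        (Primrec.list_foldl (Primrec.ofNat (List ℕ)) (Primrec.const (0, [])) hstep))
    exact hfold.of_eq fun n => by rw [raise'_foldl_aux]; simp
  have hcase : Primrec fun o : Option ℕ =>
      (Option.casesOn o eEv fun m => eL (m / 2) : ℕ) :=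
    Primrec.option_casesOn Primrec.id (Primrec.const eEv)
      ((hL.comp (Primrec.nat_div.comp Primrec.snd (Primrec.const 2))).to₂)
  have hG : Primrec fun n : ℕ => learner eL eEv (ofNat (Finset ℕ) n) :=
    (hcase.comp (hfind.comp hraise)).of_eq fun n => by
      show _ = learner eL eEv _
      rw [learner, ← sort_ofNat]
  exact Primrec.to_comp (Primrec.ofNat_iff.2 hG)


lemma mem_fset {T : Text} {n x : ℕ} : x ∈ fset T n ↔ ∃ m, m < n ∧ T m = some x := by
  simp only [fset, List.mem_toFinset, List.reduceOption_mem_iff, List.mem_map, List.mem_range]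
  exact (List.mem_map (f := T)).trans (by simp only [List.mem_range])

lemma fset_subset_content {T : Text} {n x : ℕ} (h : x ∈ fset T n) : x ∈ content T := by
  obtain ⟨m, _, hm⟩ := mem_fset.1 h; exact ⟨m, hm⟩

lemma fset_mono {T : Text} {i j : ℕ} (hij : i ≤ j) : fset T i ⊆ fset T j := by
  intro x hx
  obtain ⟨m, hm, he⟩ := mem_fset.1 hx
  exact mem_fset.2 ⟨m, lt_of_lt_of_le hm hij, he⟩

theorem part1 : sepClass ∈ RTxtSdMonEx := by
  obtain ⟨eEv, hEv⟩ := exists_eEv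
  obtain ⟨eL, hLprim, hLW⟩ := exists_eL
  refine ⟨learner eL eEv, learner_computable hLprim, ?_⟩
  intro L hL T hT
  rcases hL with rfl | ⟨k, rfl⟩
  · -- L = Ev
    have hall : ∀ n, ∀ m ∈ fset T n, m % 2 = 0 := by
      intro n m hm
      have : m ∈ Ev := hT ▸ fset_subset_content hm
      rwa [Ev, Set.mem_setOf_eq, Nat.even_iff] at this
    constructor
    · exact ⟨eEv, hEv, 0, fun n _ => learner_no_odd (hall n)⟩
    · intro i j _
      rw [learner_no_odd (hall i), learner_no_odd (hall j)]
  · -- L = Lodd k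
    have hsub : ∀ n, ∀ m ∈ fset T n, m ∈ Lodd k := by
      intro n m hm; exact hT ▸ fset_subset_content hm
    constructor
    · refine ⟨eL k, hLW k, ?_⟩
      have hmem : 2 * k + 1 ∈ content T := by
        rw [hT]; exact Or.inr rfl
      obtain ⟨m₀, hm₀⟩ := hmem
      refine ⟨m₀ + 1, fun n hn => ?_⟩
      exact learner_odd (mem_fset.2 ⟨m₀, by omega, hm₀⟩) (hsub n)
    · intro i j hij x hx
      by_cases hodd : ∀ m ∈ fset T j, m % 2 = 0
      · have hi : ∀ m ∈ fset T i, m % 2 = 0 := fun m hm => hodd m (fset_mono hij hm)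
        rwa [learner_no_odd (eL := eL) (eEv := eEv) hodd,
          ← learner_no_odd (eL := eL) (eEv := eEv) hi]
      · push_neg at hodd
        obtain ⟨m, hm, hm2⟩ := hodd
        have hmk : m = 2 * k + 1 := by
          rcases hsub j m hm with ⟨he, _⟩ | he
          · rw [Nat.even_iff] at he; omega
          · exact he
        rw [learner_odd (hmk ▸ hm) (hsub j)]
        refine ⟨?_, hx.2⟩
        rw [hLW k, ← hT]
        exact hx.2

theorem part2 : sepClass ∉ TxtGSMonBc := by
  rintro ⟨h, -, hlearn⟩
  set T : Text := fun n => some (2 * n) with hTdef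
  have hT : content T = Ev := by
    ext x
    simp only [content, Set.mem_setOf_eq, hTdef, Option.some.injEq, Ev]
    constructor
    · rintro ⟨n, rfl⟩; exact ⟨n, by omega⟩
    · rintro ⟨r, rfl⟩; exact ⟨r, by omega⟩
  obtain ⟨⟨n₀, hn₀⟩, -⟩ := hlearn Ev (Set.mem_insert _ _) T hT
  obtain ⟨e₀, he₀mem, he₀⟩ := hn₀ n₀ le_rfl
  set T' : Text := fun n =>
    some (if n < n₀ then 2 * n else if n ≤ 2 * n₀ then 2 * (n - n₀) else 2 * n₀ + 1) with hT'def
  have hT' : content T' = Lodd n₀ := by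
    ext x
    simp only [content, Set.mem_setOf_eq, hT'def, Option.some.injEq, Lodd]
    constructor
    · rintro ⟨n, rfl⟩
      split_ifs with h1 h2
      · exact Or.inl ⟨⟨n, by omega⟩, by omega⟩
      · exact Or.inl ⟨⟨n - n₀, by omega⟩, by omega⟩
      · exact Or.inr rfl
    · rintro (⟨⟨r, rfl⟩, hle⟩ | rfl)
      · refine ⟨n₀ + r, ?_⟩
        rw [if_neg (by omega), if_pos (by omega)]
        omega
      · refine ⟨2 * n₀ + 1, ?_⟩
        rw [if_neg (by omega), if_neg (by omega)]
  have hseg : seg T' n₀ = seg T n₀ := by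
    unfold seg
    apply List.map_congr_left
    intro a ha
    rw [List.mem_range] at ha
    simp [hTdef, hT'def, if_pos ha]
  obtain ⟨⟨n₁, hn₁⟩, hsm'⟩ := hlearn (Lodd n₀)
    (Set.mem_insert_iff.2 (Or.inr ⟨n₀, rfl⟩)) T' hT'
  obtain ⟨e₁, he₁mem, he₁⟩ := hn₁ (max n₀ n₁) (le_max_right _ _)
  have hsub : Wset e₀ ⊆ Wset e₁ :=
    hsm' n₀ (max n₀ n₁) (le_max_left _ _) e₀ (by rw [hseg]; exact he₀mem) e₁ he₁mem
  have hx : (2 * n₀ + 2) ∈ Wset e₀ := by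
    rw [he₀]; exact ⟨n₀ + 1, by omega⟩
  have h2 := hsub hx
  rw [he₁] at h2
  rcases h2 with ⟨⟨r, hr⟩, hle⟩ | heq <;> omega

/-- [RTxtSdMonEx] \ [TxtGSMonBc] ≠ ∅. -/
theorem RTxtSdMonEx_not_sub_TxtGSMonBc :
    ∃ 𝓛 : Set (Set ℕ), 𝓛 ∈ RTxtSdMonEx ∧ 𝓛 ∉ TxtGSMonBc :=
  ⟨sepClass, part1, part2⟩
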